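/- For any two star bodies K and L in ℝ^d (d ≥ 1) and any real α > 0, the dual mixed volume Ṽ_{−α}(L,K) := (1/d)∫_{S^{d-1}} ρ_L(u)^{d+α} ρ_K(u)^{−α} dσ(u) satisfies Ṽ_{−α}(L, K) ≥ vol_d(L)^{(d+α)/d} · vol_d(K)^{−α/d}, and equality holds if and only if K and L are dilates, i.e., there exists λ > 0 with K = λ·L. -/

import Mathlib

open MeasureTheory Metric Set Filter Pointwise

noncomputable section

abbrev Euc (d : ℕ) : Type := EuclideanSpace ℝ (Fin d)

/-- Radial function of a set: `ρ_K(x) = sup {t > 0 : t • x ∈ K}`. -/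
def radialFn {d : ℕ} (K : Set (Euc d)) (x : Euc d) : ℝ :=
  sSup {t : ℝ | 0 < t ∧ t • x ∈ K}

/-- A star body: compact, `0` in the interior, star-shaped about `0`, with radial function
positive and continuous on the unit sphere. -/
def IsStarBody {d : ℕ} (K : Set (Euc d)) : Prop :=
  IsCompact K ∧ (0 : Euc d) ∈ interior K ∧
    (∀ x ∈ K, segment ℝ 0 x ⊆ K) ∧
    (∀ u ∈ sphere (0 : Euc d) 1, 0 < radialFn K u) ∧
    ContinuousOn (radialFn K) (sphere (0 : Euc d) 1)

/-- The kernel of a star body. -/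
def starKernel {d : ℕ} (K : Set (Euc d)) : Set (Euc d) :=
  {x | x ∈ K ∧ ∀ y ∈ K, segment ℝ x y ⊆ K}

/-- Radial metric between star bodies. -/
def radialDist {d : ℕ} (K L : Set (Euc d)) : ℝ :=
  ⨆ u : sphere (0 : Euc d) 1, |radialFn K (u : Euc d) - radialFn L (u : Euc d)|

/-- The adversarial objective `F(K; μ, ν) = E_μ[‖x‖_K] - E_ν[‖x‖_K]`. -/
def Fobj {d : ℕ} (K : Set (Euc d)) (μ ν : Measure (Euc d)) : ℝ :=
  (∫ x, gauge K x ∂μ) - (∫ x, gauge K x ∂ν)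


variable {d : ℕ}

lemma bddAbove_radialSet {K : Set (Euc d)} (hKc : IsCompact K) {u : Euc d}
    (hu1 : ‖u‖ = 1) : BddAbove {t : ℝ | 0 < t ∧ t • u ∈ K} := by
  obtain ⟨R, hR⟩ := hKc.isBounded.subset_closedBall 0
  refine ⟨R, fun t ht => ?_⟩
  have h1 : ‖t • u‖ ≤ R := by simpa [mem_closedBall_zero_iff] using hR ht.2
  rwa [norm_smul, hu1, mul_one, Real.norm_eq_abs, abs_of_pos ht.1] at h1

lemma IsStarBody.radialFn_smul_mem {K : Set (Euc d)} (hK : IsStarBody K)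
    {u : Euc d} (hu : u ∈ sphere (0 : Euc d) 1) : radialFn K u • u ∈ K := by
  obtain ⟨hKc, h0, hstar, hpos, _⟩ := hK
  have hu1 : ‖u‖ = 1 := by simpa using hu
  obtain ⟨ε, hε, hball⟩ := Metric.mem_nhds_iff.1 (mem_interior_iff_mem_nhds.1 h0)
  have hne : {t : ℝ | 0 < t ∧ t • u ∈ K}.Nonempty := by
    refine ⟨ε/2, by positivity, hball ?_⟩
    rw [mem_ball_zero_iff, norm_smul, hu1, mul_one, Real.norm_eq_abs,
      abs_of_pos (by positivity)]
    linarith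
  have hcl : sSup {t : ℝ | 0 < t ∧ t • u ∈ K} ∈ closure {t : ℝ | 0 < t ∧ t • u ∈ K} :=
    csSup_mem_closure hne (bddAbove_radialSet hKc hu1)
  have hsub : closure {t : ℝ | 0 < t ∧ t • u ∈ K} ⊆ (fun t : ℝ => t • u) ⁻¹' K :=
    closure_minimal (fun t ht => ht.2)
      (hKc.isClosed.preimage (continuous_id.smul continuous_const))
  exact hsub hcl

lemma IsStarBody.smul_mem_iff {K : Set (Euc d)} (hK : IsStarBody K)
    {u : Euc d} (hu : u ∈ sphere (0 : Euc d) 1) {t : ℝ} (ht : 0 ≤ t) :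
    t • u ∈ K ↔ t ≤ radialFn K u := by
  have hu1 : ‖u‖ = 1 := by simpa using hu
  have hρpos := hK.2.2.2.1 u hu
  constructor
  · intro htu
    rcases eq_or_lt_of_le ht with h | h
    · rw [← h]; exact hρpos.le
    · exact le_csSup (bddAbove_radialSet hK.1 hu1) ⟨h, htu⟩
  · intro hle
    have hx : radialFn K u • u ∈ K := hK.radialFn_smul_mem hu
    have : t • u ∈ segment ℝ (0 : Euc d) (radialFn K u • u) := by
      refine ⟨1 - t / radialFn K u, t / radialFn K u, ?_, by positivity, by ring, ?_⟩
      · have : t / radialFn K u ≤ 1 := (div_le_one hρpos).2 hle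
        linarith
      · rw [smul_zero, zero_add, smul_smul, div_mul_cancel₀ _ hρpos.ne']
    exact hK.2.2.1 _ hx this

lemma radialFn_of_dilate {K L : Set (Euc d)} (hK : IsStarBody K) (hL : IsStarBody L)
    {lam : ℝ} (hlam : 0 < lam) (h : K = lam • L) {u : Euc d} (hu : u ∈ sphere (0 : Euc d) 1) :
    radialFn K u = lam * radialFn L u := by
  have key : ∀ t : ℝ, 0 ≤ t → (t ≤ radialFn K u ↔ t ≤ lam * radialFn L u) := by
    intro t ht
    have h1 : (t • u ∈ K) ↔ ((lam⁻¹ * t) • u ∈ L) := by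
      rw [h, mem_smul_set_iff_inv_smul_mem₀ hlam.ne', smul_smul]
    rw [← hK.smul_mem_iff hu ht, h1, hL.smul_mem_iff hu (by positivity),
      inv_mul_le_iff₀ hlam]
  have hKpos := hK.2.2.2.1 u hu
  have hLpos := hL.2.2.2.1 u hu
  have h1 := (key _ hKpos.le).1 le_rfl
  have h2 := (key _ (by positivity)).2 le_rfl
  linarith

lemma eq_dilate_of_radialFn {K L : Set (Euc d)} (hK : IsStarBody K) (hL : IsStarBody L)
    {lam : ℝ} (hlam : 0 < lam)
    (h : ∀ u ∈ sphere (0 : Euc d) 1, radialFn K u = lam * radialFn L u) : K = lam • L := by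
  ext x
  rcases eq_or_ne x 0 with rfl | hx
  · constructor
    · intro _
      exact ⟨0, interior_subset hL.2.1, smul_zero _⟩
    · intro _
      exact interior_subset hK.2.1
  · have hx0 : 0 < ‖x‖ := norm_pos_iff.2 hx
    set u : Euc d := ‖x‖⁻¹ • x with hudef
    have hu : u ∈ sphere (0 : Euc d) 1 := by
      rw [mem_sphere_zero_iff_norm, hudef, norm_smul, Real.norm_eq_abs,
        abs_of_pos (by positivity), inv_mul_cancel₀ hx0.ne']
    have hxu : ‖x‖ • u = x := by rw [hudef, smul_smul, mul_inv_cancel₀ hx0.ne', one_smul]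
    have hKmem : x ∈ K ↔ ‖x‖ ≤ radialFn K u := by
      conv_lhs => rw [← hxu]
      exact hK.smul_mem_iff hu (norm_nonneg x)
    have hLmem : x ∈ lam • L ↔ ‖x‖ ≤ lam * radialFn L u := by
      rw [mem_smul_set_iff_inv_smul_mem₀ hlam.ne']
      conv_lhs => rw [← hxu, smul_smul]
      rw [hL.smul_mem_iff hu (by positivity), inv_mul_le_iff₀ hlam]
    rw [hKmem, hLmem, h u hu]

lemma exists_unit (hd : 1 ≤ d) : ∃ u : Euc d, ‖u‖ = 1 :=
  ⟨EuclideanSpace.single (⟨0, hd⟩ : Fin d) (1 : ℝ), by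
    rw [EuclideanSpace.norm_single]; norm_num⟩

lemma annulus_formula (hd : 1 ≤ d) (σ : Measure (sphere (0 : Euc d) 1))
    (hσ : ∀ g : Euc d → ℝ, Integrable g volume →
      ∫ x, g x = ∫ u : sphere (0 : Euc d) 1,
        (∫ t in Ioi (0 : ℝ), t ^ (d - 1) * g (t • (u : Euc d))) ∂σ)
    (f : Euc d → ℝ) (hf : ContinuousOn f (sphere (0 : Euc d) 1)) :
    ∫ x, Set.indicator {y : Euc d | ‖y‖ ∈ Icc (1:ℝ) 2} (fun y => f (‖y‖⁻¹ • y)) x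
      = ((2 ^ d - 1) / d) * ∫ u : sphere (0 : Euc d) 1, f (u : Euc d) ∂σ := by
  set A : Set (Euc d) := {y : Euc d | ‖y‖ ∈ Icc (1:ℝ) 2} with hA
  set F : Euc d → ℝ := fun y => f (‖y‖⁻¹ • y) with hF
  have hAclosed : IsClosed A := isClosed_Icc.preimage continuous_norm
  have hAmeas : MeasurableSet A := hAclosed.measurableSet
  have hAsub : A ⊆ closedBall (0 : Euc d) 2 := fun y hy => by
    rw [mem_closedBall_zero_iff]; exact hy.2
  have hAcomp : IsCompact A :=
    Metric.isCompact_of_isClosed_isBounded hAclosed (isBounded_closedBall.subset hAsub)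
  have hFcont : ContinuousOn F {y : Euc d | y ≠ 0} := by
    apply hf.comp
    · exact ((continuous_norm.continuousOn.inv₀ fun y hy =>
        norm_ne_zero_iff.2 hy).smul continuousOn_id)
    · intro y hy
      rw [mem_sphere_zero_iff_norm, norm_smul, Real.norm_eq_abs,
        abs_of_pos (by simp [norm_pos_iff.2 hy] : (0:ℝ) < ‖y‖⁻¹),
        inv_mul_cancel₀ (norm_ne_zero_iff.2 hy)]
  have hA0 : A ⊆ {y : Euc d | y ≠ 0} := fun y hy => by
    have : (1:ℝ) ≤ ‖y‖ := hy.1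
    intro h0; rw [h0] at this; simp only [norm_zero] at this; linarith
  have hInt : Integrable (Set.indicator A F) volume :=
    (integrable_indicator_iff hAmeas).2 ((hFcont.mono hA0).integrableOn_compact hAcomp)
  rw [hσ _ hInt]
  have hinner : ∀ u : sphere (0 : Euc d) 1,
      (∫ t in Ioi (0:ℝ), t ^ (d - 1) * Set.indicator A F (t • (u : Euc d)))
        = ((2 ^ d - 1) / d) * f (u : Euc d) := by
    intro u
    have hu1 : ‖(u : Euc d)‖ = 1 := by
      have := u.2; rwa [mem_sphere_zero_iff_norm] at this
    have heq : EqOn (fun t : ℝ => t ^ (d - 1) * Set.indicator A F (t • (u : Euc d)))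
        (Set.indicator (Icc (1:ℝ) 2) (fun t : ℝ => t ^ (d - 1) * f (u : Euc d)))
        (Ioi (0:ℝ)) := by
      intro t ht
      have ht0 : (0:ℝ) < t := ht
      have hnorm : ‖t • (u : Euc d)‖ = t := by
        rw [norm_smul, hu1, mul_one, Real.norm_eq_abs, abs_of_pos ht0]
      by_cases hmem : t ∈ Icc (1:ℝ) 2
      · have hmemA : t • (u : Euc d) ∈ A := by rw [hA, mem_setOf_eq, hnorm]; exact hmem
        show t ^ (d - 1) * Set.indicator A F (t • (u : Euc d)) = _
        rw [Set.indicator_of_mem hmem, Set.indicator_of_mem hmemA]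
        simp only [hF]
        rw [hnorm, smul_smul, inv_mul_cancel₀ ht0.ne', one_smul]
      · have hmemA : t • (u : Euc d) ∉ A := by rw [hA, mem_setOf_eq, hnorm]; exact hmem
        show t ^ (d - 1) * Set.indicator A F (t • (u : Euc d)) = _
        rw [Set.indicator_of_notMem hmem, Set.indicator_of_notMem hmemA, mul_zero]
    rw [setIntegral_congr_fun measurableSet_Ioi heq, setIntegral_indicator measurableSet_Icc]
    have hIS : Ioi (0:ℝ) ∩ Icc (1:ℝ) 2 = Icc (1:ℝ) 2 :=
      inter_eq_self_of_subset_right (fun t ht => lt_of_lt_of_le one_pos ht.1)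
    rw [hIS, integral_Icc_eq_integral_Ioc, ← intervalIntegral.integral_of_le (by norm_num : (1:ℝ) ≤ 2),
      intervalIntegral.integral_mul_const, integral_pow, Nat.sub_add_cancel hd]
    have hcast : ((d : ℝ) - 1) + 1 = (d : ℝ) := by ring
    rw [Nat.cast_sub hd, Nat.cast_one, hcast, one_pow]
  rw [integral_congr_ae (Eventually.of_forall hinner), integral_const_mul]

lemma sigma_pos_finite (hd : 1 ≤ d) (σ : Measure (sphere (0 : Euc d) 1))
    (hσ : ∀ g : Euc d → ℝ, Integrable g volume →
      ∫ x, g x = ∫ u : sphere (0 : Euc d) 1,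
        (∫ t in Ioi (0 : ℝ), t ^ (d - 1) * g (t • (u : Euc d))) ∂σ) :
    0 < (σ Set.univ).toReal ∧ σ Set.univ ≠ ⊤ := by
  have h := annulus_formula hd σ hσ (fun _ => 1) continuousOn_const
  set A : Set (Euc d) := {y : Euc d | ‖y‖ ∈ Icc (1:ℝ) 2} with hA
  have hAmeas : MeasurableSet A := (isClosed_Icc.preimage continuous_norm).measurableSet
  have hLHS : ∫ x, Set.indicator A (fun y => (1:ℝ)) x = (volume A).toReal := by
    rw [integral_indicator hAmeas, setIntegral_const, smul_eq_mul, mul_one]; rfl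
  have hRHS : ∫ u : sphere (0 : Euc d) 1, (1:ℝ) ∂σ = (σ Set.univ).toReal := by
    rw [integral_const, smul_eq_mul, mul_one]; rfl
  rw [hLHS, hRHS] at h
  -- volume A is positive and finite
  obtain ⟨u₀, hu₀⟩ := exists_unit (d := d) hd
  have hball : ball ((3/2 : ℝ) • u₀) (1/4 : ℝ) ⊆ A := by
    intro y hy
    rw [mem_ball] at hy
    have h32 : ‖(3/2 : ℝ) • u₀‖ = 3/2 := by
      rw [norm_smul, hu₀, mul_one, Real.norm_eq_abs, abs_of_pos]; norm_num
    have h1 : |‖y‖ - ‖(3/2:ℝ) • u₀‖| ≤ dist y ((3/2:ℝ) • u₀) := abs_norm_sub_norm_le _ _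
    rw [h32] at h1
    have := abs_le.1 (h1.trans hy.le)
    constructor <;> [linarith [this.1]; linarith [this.2]]
  have hApos : 0 < volume A :=
    lt_of_lt_of_le (measure_ball_pos volume _ (by norm_num)) (measure_mono hball)
  have hAfin : volume A < ⊤ := by
    refine lt_of_le_of_lt (measure_mono (fun y (hy : y ∈ A) => ?_)) (measure_closedBall_lt_top
      (x := (0 : Euc d)) (r := 2))
    rw [mem_closedBall_zero_iff]; exact hy.2
  have hAtr : 0 < (volume A).toReal := ENNReal.toReal_pos hApos.ne' hAfin.ne
  have hC : 0 < ((2:ℝ) ^ d - 1) / d := by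
    have h2 : (2:ℝ) ^ d ≥ 2 ^ 1 := by
      apply pow_le_pow_right₀ (by norm_num) hd
    have : (0:ℝ) < d := by exact_mod_cast Nat.pos_of_ne_zero (by omega)
    apply div_pos (by norm_num at h2 ⊢; linarith) this
  have hσpos : 0 < (σ Set.univ).toReal := by
    by_contra hcon
    push_neg at hcon
    have : (σ Set.univ).toReal = 0 := le_antisymm hcon ENNReal.toReal_nonneg
    rw [this, mul_zero] at h
    linarith
  refine ⟨hσpos, fun htop => ?_⟩
  rw [htop] at hσpos
  simp at hσpos

lemma vanish_of_integral_zero (hd : 1 ≤ d) (σ : Measure (sphere (0 : Euc d) 1))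
    (hσ : ∀ g : Euc d → ℝ, Integrable g volume →
      ∫ x, g x = ∫ u : sphere (0 : Euc d) 1,
        (∫ t in Ioi (0 : ℝ), t ^ (d - 1) * g (t • (u : Euc d))) ∂σ)
    (f : Euc d → ℝ) (hf : ContinuousOn f (sphere (0 : Euc d) 1))
    (hnn : ∀ x ∈ sphere (0 : Euc d) 1, 0 ≤ f x)
    (hzero : ∫ u : sphere (0 : Euc d) 1, f (u : Euc d) ∂σ = 0) :
    ∀ x ∈ sphere (0 : Euc d) 1, f x = 0 := by
  by_contra hcon
  push_neg at hcon
  obtain ⟨x₀, hx₀, hne⟩ := hcon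
  have hc : 0 < f x₀ := lt_of_le_of_ne (hnn x₀ hx₀) (Ne.symm hne)
  set c := f x₀ with hcdef
  have h := annulus_formula hd σ hσ f hf
  rw [hzero, mul_zero] at h
  set A : Set (Euc d) := {y : Euc d | ‖y‖ ∈ Icc (1:ℝ) 2} with hA
  set F : Euc d → ℝ := fun y => f (‖y‖⁻¹ • y) with hF
  have hAclosed : IsClosed A := isClosed_Icc.preimage continuous_norm
  have hAmeas : MeasurableSet A := hAclosed.measurableSet
  have hAsub : A ⊆ closedBall (0 : Euc d) 2 := fun y hy => by
    rw [mem_closedBall_zero_iff]; exact hy.2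
  have hAcomp : IsCompact A :=
    Metric.isCompact_of_isClosed_isBounded hAclosed (isBounded_closedBall.subset hAsub)
  have hnormmem : ∀ y : Euc d, y ≠ 0 → (‖y‖⁻¹ • y) ∈ sphere (0 : Euc d) 1 := by
    intro y hy
    rw [mem_sphere_zero_iff_norm, norm_smul, Real.norm_eq_abs,
      abs_of_pos (by simp [norm_pos_iff.2 hy] : (0:ℝ) < ‖y‖⁻¹),
      inv_mul_cancel₀ (norm_ne_zero_iff.2 hy)]
  have hFcont : ContinuousOn F {y : Euc d | y ≠ 0} := by
    apply hf.comp
    · exact ((continuous_norm.continuousOn.inv₀ fun y hy =>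
        norm_ne_zero_iff.2 hy).smul continuousOn_id)
    · exact fun y hy => hnormmem y hy
  have hA0 : A ⊆ {y : Euc d | y ≠ 0} := fun y hy => by
    have h1 : (1:ℝ) ≤ ‖y‖ := hy.1
    intro h0; rw [h0] at h1; simp only [norm_zero] at h1; linarith
  have hInt : Integrable (Set.indicator A F) volume :=
    (integrable_indicator_iff hAmeas).2 ((hFcont.mono hA0).integrableOn_compact hAcomp)
  have hgnn : ∀ y, 0 ≤ Set.indicator A F y := by
    intro y
    by_cases hy : y ∈ A
    · rw [Set.indicator_of_mem hy]
      exact hnn _ (hnormmem y (hA0 hy))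
    · rw [Set.indicator_of_notMem hy]
  -- the open set where F > c/2
  set U : Set (Euc d) := {y : Euc d | ‖y‖ ∈ Ioo (1:ℝ) 2} with hU
  have hUopen : IsOpen U := isOpen_Ioo.preimage continuous_norm
  have hU0 : U ⊆ {y : Euc d | y ≠ 0} := fun y hy => by
    have h1 : (1:ℝ) < ‖y‖ := hy.1
    intro h0; rw [h0] at h1; simp only [norm_zero] at h1; linarith
  set A' : Set (Euc d) := U ∩ F ⁻¹' (Ioi (c/2)) with hA'
  have hA'open : IsOpen A' :=
    (hFcont.mono hU0).isOpen_inter_preimage hUopen isOpen_Ioi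
  have hA'meas : MeasurableSet A' := hA'open.measurableSet
  have hA'sub : A' ⊆ A := fun y hy => ⟨hy.1.1.le, hy.1.2.le⟩
  have hy₀ : ((3/2 : ℝ) • x₀) ∈ A' := by
    have h32 : ‖(3/2 : ℝ) • x₀‖ = 3/2 := by
      rw [norm_smul, Real.norm_eq_abs, abs_of_pos (by norm_num : (0:ℝ) < 3/2)]
      rw [mem_sphere_zero_iff_norm] at hx₀
      rw [hx₀, mul_one]
    constructor
    · rw [hU, mem_setOf_eq, h32]; constructor <;> norm_num
    · show F ((3/2 : ℝ) • x₀) ∈ Ioi (c/2)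
      have : F ((3/2 : ℝ) • x₀) = f x₀ := by
        simp only [hF, h32]
        rw [smul_smul]
        norm_num
      rw [this]
      show c/2 < c
      linarith
  have hA'fin : volume A' ≠ ⊤ := by
    refine (lt_of_le_of_lt (measure_mono (fun y hy => hAsub (hA'sub hy)))
      (measure_closedBall_lt_top (x := (0:Euc d)) (r := 2))).ne
  have hA'pos : 0 < (volume A').toReal :=
    ENNReal.toReal_pos (hA'open.measure_pos volume ⟨_, hy₀⟩).ne' hA'fin
  have step1 : ∫ y in A', Set.indicator A F y ≤ ∫ y, Set.indicator A F y :=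
    setIntegral_le_integral hInt (ae_of_all _ hgnn)
  have step2 : ∫ y in A', Set.indicator A F y = ∫ y in A', F y :=
    setIntegral_congr_fun hA'meas (fun y hy => Set.indicator_of_mem (hA'sub hy) F)
  have step3 : c/2 * (volume A').toReal ≤ ∫ y in A', F y := by
    apply setIntegral_ge_of_const_le_real hA'meas hA'fin
    · exact fun y hy => (le_of_lt hy.2)
    · exact ((hFcont.mono hA0).integrableOn_compact hAcomp).mono_set hA'sub
  have : (0:ℝ) < c/2 * (volume A').toReal := by positivity
  rw [h] at step1
  rw [step2] at step1
  linarith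

lemma volume_starBody (hd : 1 ≤ d) (σ : Measure (sphere (0 : Euc d) 1))
    (hσ : ∀ g : Euc d → ℝ, Integrable g volume →
      ∫ x, g x = ∫ u : sphere (0 : Euc d) 1,
        (∫ t in Ioi (0 : ℝ), t ^ (d - 1) * g (t • (u : Euc d))) ∂σ)
    {K : Set (Euc d)} (hK : IsStarBody K) :
    ∫ u : sphere (0 : Euc d) 1, radialFn K (u : Euc d) ^ d ∂σ
      = d * (volume K).toReal := by
  have hKmeas : MeasurableSet K := hK.1.isClosed.measurableSet
  have hInt : Integrable (Set.indicator K (fun _ => (1:ℝ))) volume :=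
    (integrable_indicator_iff hKmeas).2 (integrableOn_const hK.1.measure_lt_top.ne)
  have h := hσ _ hInt
  have hLHS : ∫ x, Set.indicator K (fun _ => (1:ℝ)) x = (volume K).toReal := by
    rw [integral_indicator hKmeas, setIntegral_const, smul_eq_mul, mul_one]; rfl
  rw [hLHS] at h
  have hinner : ∀ u : sphere (0 : Euc d) 1,
      (∫ t in Ioi (0:ℝ), t ^ (d - 1) * Set.indicator K (fun _ => (1:ℝ)) (t • (u : Euc d)))
        = radialFn K (u : Euc d) ^ d / d := by
    intro u
    have hu : (u : Euc d) ∈ sphere (0 : Euc d) 1 := u.2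
    have hρ : 0 < radialFn K (u : Euc d) := hK.2.2.2.1 _ hu
    set ρ := radialFn K (u : Euc d) with hρdef
    have heq : EqOn (fun t : ℝ => t ^ (d - 1) * Set.indicator K (fun _ => (1:ℝ)) (t • (u : Euc d)))
        (Set.indicator (Ioc (0:ℝ) ρ) (fun t : ℝ => t ^ (d - 1))) (Ioi (0:ℝ)) := by
      intro t ht
      have ht0 : (0:ℝ) < t := ht
      have hmem_iff : t • (u : Euc d) ∈ K ↔ t ≤ ρ := hK.smul_mem_iff hu ht0.le
      by_cases hmem : t ≤ ρ
      · show t ^ (d - 1) * Set.indicator K (fun _ => (1:ℝ)) (t • (u : Euc d)) = _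
        rw [Set.indicator_of_mem (hmem_iff.2 hmem), Set.indicator_of_mem (show t ∈ Ioc (0:ℝ) ρ from ⟨ht0, hmem⟩), mul_one]
      · show t ^ (d - 1) * Set.indicator K (fun _ => (1:ℝ)) (t • (u : Euc d)) = _
        rw [Set.indicator_of_notMem (fun hc => hmem (hmem_iff.1 hc)),
          Set.indicator_of_notMem (fun hc => hmem hc.2), mul_zero]
    rw [setIntegral_congr_fun measurableSet_Ioi heq, setIntegral_indicator measurableSet_Ioc]
    have hIS : Ioi (0:ℝ) ∩ Ioc (0:ℝ) ρ = Ioc (0:ℝ) ρ :=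
      inter_eq_self_of_subset_right (fun t ht => ht.1)
    rw [hIS, ← intervalIntegral.integral_of_le hρ.le, integral_pow, Nat.sub_add_cancel hd]
    rw [Nat.cast_sub hd, Nat.cast_one, zero_pow (by omega : d ≠ 0)]
    ring_nf
  rw [integral_congr_ae (Eventually.of_forall hinner), integral_div] at h
  have hdpos : (0:ℝ) < d := by exact_mod_cast Nat.pos_of_ne_zero (by omega)
  field_simp at h
  linarith

lemma young_ineq {θ x y : ℝ} (hθ : 0 < θ) (hθ1 : θ < 1) (hx : 0 ≤ x) (hy : 0 ≤ y) :
    x ^ θ * y ^ (1 - θ) ≤ θ * x + (1 - θ) * y :=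
  Real.geom_mean_le_arith_mean2_weighted hθ.le (by linarith) hx hy (by ring)

lemma young_eq {θ x y : ℝ} (hθ : 0 < θ) (hθ1 : θ < 1) (hx : 0 < x) (hy : 0 < y)
    (h : x ^ θ * y ^ (1 - θ) = θ * x + (1 - θ) * y) : x = y := by
  by_contra hne
  have hlog := strictConcaveOn_log_Ioi.2 (mem_Ioi.2 hx) (mem_Ioi.2 hy) hne hθ
    (by linarith : (0:ℝ) < 1 - θ) (by ring)
  simp only [smul_eq_mul] at hlog
  have hlogeq : Real.log (x ^ θ * y ^ (1 - θ)) = θ * Real.log x + (1 - θ) * Real.log y := by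
    rw [Real.log_mul (Real.rpow_pos_of_pos hx θ).ne' (Real.rpow_pos_of_pos hy (1 - θ)).ne',
      Real.log_rpow hx, Real.log_rpow hy]
  rw [h] at hlogeq
  linarith

lemma integrable_restrict_sphere {σ : Measure (sphere (0 : Euc d) 1)} (hfin : σ Set.univ ≠ ⊤)
    {f : Euc d → ℝ} (hf : ContinuousOn f (sphere (0 : Euc d) 1)) :
    Integrable (fun u : sphere (0 : Euc d) 1 => f (u : Euc d)) σ := by
  haveI : IsFiniteMeasure σ := ⟨lt_top_iff_ne_top.2 hfin⟩
  have hc : Continuous (fun u : sphere (0 : Euc d) 1 => f (u : Euc d)) := by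
    exact hf.restrict
  exact hc.integrable_of_hasCompactSupport ((isClosed_tsupport _).isCompact)

lemma integral_pos_sphere (hd : 1 ≤ d) (σ : Measure (sphere (0 : Euc d) 1))
    (hσ : ∀ g : Euc d → ℝ, Integrable g volume →
      ∫ x, g x = ∫ u : sphere (0 : Euc d) 1,
        (∫ t in Ioi (0 : ℝ), t ^ (d - 1) * g (t • (u : Euc d))) ∂σ)
    {f : Euc d → ℝ} (hf : ContinuousOn f (sphere (0 : Euc d) 1))
    (hpos : ∀ x ∈ sphere (0 : Euc d) 1, 0 < f x) :
    0 < ∫ u : sphere (0 : Euc d) 1, f (u : Euc d) ∂σ := by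
  have hnn : 0 ≤ ∫ u : sphere (0 : Euc d) 1, f (u : Euc d) ∂σ :=
    integral_nonneg (fun u => (hpos _ u.2).le)
  rcases hnn.eq_or_lt with heq | hlt
  · exfalso
    have hv := vanish_of_integral_zero hd σ hσ f hf (fun x hx => (hpos x hx).le) heq.symm
    obtain ⟨u₀, hu₀⟩ := exists_unit (d := d) hd
    have hu₀s : u₀ ∈ sphere (0 : Euc d) 1 := mem_sphere_zero_iff_norm.2 hu₀
    exact (hpos u₀ hu₀s).ne' (hv u₀ hu₀s)
  · exact hlt

lemma volume_pos_starBody {K : Set (Euc d)} (hK : IsStarBody K) : 0 < (volume K).toReal :=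
  ENNReal.toReal_pos
    (lt_of_lt_of_le (isOpen_interior.measure_pos volume ⟨0, hK.2.1⟩)
      (measure_mono interior_subset)).ne' hK.1.measure_lt_top.ne

lemma bridge {p a I VK VL : ℝ} (hp : 0 < p) (ha : 0 < a) (hI : 0 < I)
    (hVK : 0 < VK) (hVL : 0 < VL) :
    ((VL ≤ I ^ (p/(p+a)) * VK ^ (1 - p/(p+a)) ↔
        1/p * I ≥ (VL/p) ^ ((p+a)/p) * (VK/p) ^ (-a/p)) ∧
     (VL = I ^ (p/(p+a)) * VK ^ (1 - p/(p+a)) ↔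
        1/p * I = (VL/p) ^ ((p+a)/p) * (VK/p) ^ (-a/p))) := by
  have hpa : 0 < p + a := by linarith
  set θ := p/(p+a) with hθdef
  set s := (p+a)/p with hsdef
  set t := a/p with htdef
  have hs : 0 < s := by positivity
  have hθs : θ * s = 1 := by rw [hθdef, hsdef]; field_simp
  have h1θs : (1 - θ) * s = t := by rw [hθdef, hsdef, htdef]; field_simp; ring
  have hst : s + -t = 1 := by rw [hsdef, htdef]; field_simp; ring
  have hpow : (I ^ θ * VK ^ (1 - θ)) ^ s = I * VK ^ t := by
    rw [Real.mul_rpow (by positivity) (by positivity), ← Real.rpow_mul hI.le,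
      ← Real.rpow_mul hVK.le, hθs, h1θs, Real.rpow_one]
  have hnt : -t = -a/p := by rw [htdef]; ring
  have hR : (VL/p) ^ s * (VK/p) ^ (-a/p) = (VL ^ s * VK ^ (-t)) * (1/p) := by
    rw [← hnt, Real.div_rpow hVL.le hp.le, Real.div_rpow hVK.le hp.le, div_mul_div_comm,
      ← Real.rpow_add hp, hst, Real.rpow_one, div_eq_mul_one_div]
  have h1 : VL ≤ I ^ θ * VK ^ (1-θ) ↔ VL ^ s ≤ I * VK ^ t := by
    rw [← hpow]
    exact (Real.rpow_le_rpow_iff hVL.le (by positivity) hs).symm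
  have h2 : VL ^ s ≤ I * VK ^ t ↔ VL ^ s * VK ^ (-t) ≤ I := by
    rw [Real.rpow_neg hVK.le, ← div_eq_mul_inv, div_le_iff₀ (Real.rpow_pos_of_pos hVK t)]
  have h3 : VL ^ s * VK ^ (-t) ≤ I ↔ 1/p * I ≥ (VL/p) ^ s * (VK/p) ^ (-a/p) := by
    rw [ge_iff_le, hR, mul_comm (1/p) I, ← mul_le_mul_iff_of_pos_right (by positivity : (0:ℝ) < 1/p)]
  have h1e : VL = I ^ θ * VK ^ (1-θ) ↔ VL ^ s = I * VK ^ t := by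
    rw [← hpow]
    constructor
    · intro h; rw [h]
    · intro h
      exact le_antisymm ((Real.rpow_le_rpow_iff hVL.le (by positivity) hs).1 h.le)
        ((Real.rpow_le_rpow_iff (by positivity) hVL.le hs).1 h.ge)
  have h2e : VL ^ s = I * VK ^ t ↔ VL ^ s * VK ^ (-t) = I := by
    rw [Real.rpow_neg hVK.le, ← div_eq_mul_inv, div_eq_iff (Real.rpow_pos_of_pos hVK t).ne']
  have h3e : VL ^ s * VK ^ (-t) = I ↔ 1/p * I = (VL/p) ^ s * (VK/p) ^ (-a/p) := by
    rw [hR, mul_comm (1/p) I, eq_comm (a := I * (1/p)), mul_left_inj' (by positivity : (1:ℝ)/p ≠ 0), eq_comm]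
  exact ⟨h1.trans (h2.trans h3), h1e.trans (h2e.trans h3e)⟩


/-- Lutwak's dual mixed volume inequality for `Ṽ₋α`, `α > 0`:
`Ṽ₋α(L,K) ≥ vol(L)^{(d+α)/d} vol(K)^{-α/d}`, with equality iff `K` and `L` are dilates. -/
theorem dualMixedVolume_neg_alpha_inequality {d : ℕ} (hd : 1 ≤ d)
    (σ : Measure (sphere (0 : Euc d) 1))
    (hσ : ∀ g : Euc d → ℝ, Integrable g volume →
      ∫ x, g x = ∫ u : sphere (0 : Euc d) 1,
        (∫ t in Ioi (0 : ℝ), t ^ (d - 1) * g (t • (u : Euc d))) ∂σ)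
    (α : ℝ) (hα : 0 < α)
    (K L : Set (Euc d)) (hK : IsStarBody K) (hL : IsStarBody L) :
    ((1 / (d : ℝ)) * ∫ u : sphere (0 : Euc d) 1,
        radialFn L (u : Euc d) ^ ((d : ℝ) + α) * radialFn K (u : Euc d) ^ (-α) ∂σ)
      ≥ (volume L).toReal ^ (((d : ℝ) + α) / d) * (volume K).toReal ^ (-α / d) ∧
    (((1 / (d : ℝ)) * ∫ u : sphere (0 : Euc d) 1,
        radialFn L (u : Euc d) ^ ((d : ℝ) + α) * radialFn K (u : Euc d) ^ (-α) ∂σ)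
      = (volume L).toReal ^ (((d : ℝ) + α) / d) * (volume K).toReal ^ (-α / d) ↔
      ∃ lam : ℝ, 0 < lam ∧ K = lam • L) := by
  obtain ⟨hσpos, hσfin⟩ := sigma_pos_finite hd σ hσ
  have hp : (0:ℝ) < (d:ℝ) := by exact_mod_cast Nat.pos_of_ne_zero (by omega)
  set p : ℝ := (d : ℝ) with hpdef
  have hpα : 0 < p + α := by linarith
  have hKpos : ∀ x ∈ sphere (0:Euc d) 1, 0 < radialFn K x := hK.2.2.2.1
  have hLpos : ∀ x ∈ sphere (0:Euc d) 1, 0 < radialFn L x := hL.2.2.2.1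
  have hKcont := hK.2.2.2.2
  have hLcont := hL.2.2.2.2
  have hWcont : ContinuousOn (fun x => radialFn L x ^ (p + α) * radialFn K x ^ (-α))
      (sphere (0:Euc d) 1) :=
    (hLcont.rpow_const (fun x hx => Or.inl (hLpos x hx).ne')).mul
      (hKcont.rpow_const (fun x hx => Or.inl (hKpos x hx).ne'))
  have hWpos : ∀ x ∈ sphere (0:Euc d) 1,
      0 < radialFn L x ^ (p + α) * radialFn K x ^ (-α) := fun x hx =>
    mul_pos (Real.rpow_pos_of_pos (hLpos x hx) _) (Real.rpow_pos_of_pos (hKpos x hx) _)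
  have hKpcont : ContinuousOn (fun x => radialFn K x ^ p) (sphere (0:Euc d) 1) :=
    hKcont.rpow_const (fun x hx => Or.inl (hKpos x hx).ne')
  have hLpcont : ContinuousOn (fun x => radialFn L x ^ p) (sphere (0:Euc d) 1) :=
    hLcont.rpow_const (fun x hx => Or.inl (hLpos x hx).ne')
  set I : ℝ := ∫ u : sphere (0 : Euc d) 1,
      radialFn L (u : Euc d) ^ (p + α) * radialFn K (u : Euc d) ^ (-α) ∂σ with hIdef
  set VK : ℝ := ∫ u : sphere (0 : Euc d) 1, radialFn K (u : Euc d) ^ p ∂σ with hVKdef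
  set VL : ℝ := ∫ u : sphere (0 : Euc d) 1, radialFn L (u : Euc d) ^ p ∂σ with hVLdef
  have hI : 0 < I := integral_pos_sphere hd σ hσ hWcont hWpos
  have hVKvol : VK = p * (volume K).toReal := by
    rw [hVKdef, ← volume_starBody hd σ hσ hK]
    exact integral_congr_ae (Eventually.of_forall fun u => by
      show radialFn K (u : Euc d) ^ p = radialFn K (u : Euc d) ^ d
      rw [hpdef, Real.rpow_natCast])
  have hVLvol : VL = p * (volume L).toReal := by
    rw [hVLdef, ← volume_starBody hd σ hσ hL]
    exact integral_congr_ae (Eventually.of_forall fun u => by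
      show radialFn L (u : Euc d) ^ p = radialFn L (u : Euc d) ^ d
      rw [hpdef, Real.rpow_natCast])
  have hVK : 0 < VK := by rw [hVKvol]; exact mul_pos hp (volume_pos_starBody hK)
  have hVL : 0 < VL := by rw [hVLvol]; exact mul_pos hp (volume_pos_starBody hL)
  set θ : ℝ := p / (p + α) with hθdef
  have hθ0 : 0 < θ := div_pos hp hpα
  have hθ1 : θ < 1 := (div_lt_one hpα).2 (by linarith)
  set Cθ : ℝ := I ^ θ * VK ^ (1 - θ) with hCθdef
  have hCθ : 0 < Cθ := mul_pos (Real.rpow_pos_of_pos hI _) (Real.rpow_pos_of_pos hVK _)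
  -- pointwise key identity
  have key : ∀ x ∈ sphere (0:Euc d) 1,
      (radialFn L x ^ (p+α) * radialFn K x ^ (-α) / I) ^ θ
        * (radialFn K x ^ p / VK) ^ (1-θ) = radialFn L x ^ p / Cθ := by
    intro x hx
    have ha := hKpos x hx
    have hb := hLpos x hx
    have hW0 : (0:ℝ) ≤ radialFn L x ^ (p+α) * radialFn K x ^ (-α) := (hWpos x hx).le
    rw [Real.div_rpow hW0 hI.le, Real.div_rpow (Real.rpow_nonneg ha.le p) hVK.le,
      div_mul_div_comm]
    rw [hCθdef]
    congr 1
    rw [Real.mul_rpow (Real.rpow_nonneg hb.le _) (Real.rpow_nonneg ha.le _),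
      ← Real.rpow_mul hb.le, ← Real.rpow_mul ha.le, ← Real.rpow_mul ha.le,
      mul_assoc, ← Real.rpow_add ha]
    have e1 : (p+α)*θ = p := by rw [hθdef]; field_simp
    have e2 : -α*θ + p*(1-θ) = 0 := by rw [hθdef]; field_simp; ring
    rw [e1, e2, Real.rpow_zero, mul_one]
  set G : Euc d → ℝ := fun x =>
    θ * (radialFn L x ^ (p+α) * radialFn K x ^ (-α) / I)
      + (1-θ) * (radialFn K x ^ p / VK)
      - (radialFn L x ^ (p+α) * radialFn K x ^ (-α) / I) ^ θ
        * (radialFn K x ^ p / VK) ^ (1-θ) with hGdef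
  have hGnn : ∀ x ∈ sphere (0:Euc d) 1, 0 ≤ G x := by
    intro x hx
    have h1 : 0 ≤ radialFn L x ^ (p+α) * radialFn K x ^ (-α) / I :=
      div_nonneg (hWpos x hx).le hI.le
    have h2 : 0 ≤ radialFn K x ^ p / VK :=
      div_nonneg (Real.rpow_nonneg (hKpos x hx).le p) hVK.le
    exact sub_nonneg.2 (young_ineq hθ0 hθ1 h1 h2)
  have hGcont : ContinuousOn G (sphere (0:Euc d) 1) := by
    rw [hGdef]
    exact ((continuousOn_const.mul (hWcont.div_const I)).add
      (continuousOn_const.mul (hKpcont.div_const VK))).sub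
      (((hWcont.div_const I).rpow_const (fun x hx =>
          Or.inl (div_pos (hWpos x hx) hI).ne')).mul
        ((hKpcont.div_const VK).rpow_const (fun x hx =>
          Or.inl (div_pos (Real.rpow_pos_of_pos (hKpos x hx) p) hVK).ne')))
  -- integrability
  have intA : Integrable (fun u : sphere (0:Euc d) 1 =>
      θ * (radialFn L (u:Euc d) ^ (p+α) * radialFn K (u:Euc d) ^ (-α) / I)) σ :=
    integrable_restrict_sphere hσfin (continuousOn_const.mul (hWcont.div_const I))
  have intB : Integrable (fun u : sphere (0:Euc d) 1 =>
      (1-θ) * (radialFn K (u:Euc d) ^ p / VK)) σ :=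
    integrable_restrict_sphere hσfin (continuousOn_const.mul (hKpcont.div_const VK))
  have intC : Integrable (fun u : sphere (0:Euc d) 1 =>
      radialFn L (u:Euc d) ^ p / Cθ) σ :=
    integrable_restrict_sphere hσfin (hLpcont.div_const Cθ)
  have eA : ∫ u : sphere (0:Euc d) 1,
      θ * (radialFn L (u:Euc d) ^ (p+α) * radialFn K (u:Euc d) ^ (-α) / I) ∂σ = θ := by
    have hfe : (fun u : sphere (0:Euc d) 1 =>
        θ * (radialFn L (u:Euc d) ^ (p+α) * radialFn K (u:Euc d) ^ (-α) / I))
        = fun u : sphere (0:Euc d) 1 =>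
          (θ/I) * (radialFn L (u:Euc d) ^ (p+α) * radialFn K (u:Euc d) ^ (-α)) := by
      funext u; ring
    rw [hfe, integral_const_mul, ← hIdef, div_mul_cancel₀ θ hI.ne']
  have eB : ∫ u : sphere (0:Euc d) 1,
      (1-θ) * (radialFn K (u:Euc d) ^ p / VK) ∂σ = 1 - θ := by
    have hfe : (fun u : sphere (0:Euc d) 1 => (1-θ) * (radialFn K (u:Euc d) ^ p / VK))
        = fun u : sphere (0:Euc d) 1 => ((1-θ)/VK) * (radialFn K (u:Euc d) ^ p) := by
      funext u; ring
    rw [hfe, integral_const_mul, ← hVKdef, div_mul_cancel₀ _ hVK.ne']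
  have eC : ∫ u : sphere (0:Euc d) 1, radialFn L (u:Euc d) ^ p / Cθ ∂σ = VL / Cθ := by
    rw [integral_div, ← hVLdef]
  have hGint : ∫ u : sphere (0:Euc d) 1, G (u:Euc d) ∂σ = 1 - VL / Cθ := by
    have hcongr : ∀ u : sphere (0:Euc d) 1, G (u:Euc d) =
        θ * (radialFn L (u:Euc d) ^ (p+α) * radialFn K (u:Euc d) ^ (-α) / I)
          + (1-θ) * (radialFn K (u:Euc d) ^ p / VK)
          - radialFn L (u:Euc d) ^ p / Cθ := by
      intro u
      rw [hGdef]
      simp only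
      rw [key (u:Euc d) u.2]
    have intAB : Integrable (fun u : sphere (0:Euc d) 1 =>
        θ * (radialFn L (u:Euc d) ^ (p+α) * radialFn K (u:Euc d) ^ (-α) / I)
          + (1-θ) * (radialFn K (u:Euc d) ^ p / VK)) σ := intA.add intB
    rw [integral_congr_ae (Eventually.of_forall hcongr),
      integral_sub intAB intC, integral_add intA intB, eA, eB, eC]
    ring
  have hineq : VL ≤ Cθ := by
    have h0 : 0 ≤ ∫ u : sphere (0:Euc d) 1, G (u:Euc d) ∂σ :=
      integral_nonneg fun u => hGnn _ u.2
    rw [hGint] at h0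
    exact (div_le_one hCθ).1 (by linarith)
  have heq_int : VL = Cθ ↔ ∫ u : sphere (0:Euc d) 1, G (u:Euc d) ∂σ = 0 := by
    rw [hGint]
    constructor
    · intro h; rw [h, div_self hCθ.ne']; ring
    · intro h
      have : VL / Cθ = 1 := by linarith
      exact (div_eq_one_iff_eq hCθ.ne').1 this
  -- equality iff dilates
  have hdil : VL = Cθ ↔ ∃ lam : ℝ, 0 < lam ∧ K = lam • L := by
    constructor
    · intro hVLC
      have hGzero := vanish_of_integral_zero hd σ hσ G hGcont hGnn (heq_int.1 hVLC)
      have hXY : ∀ x ∈ sphere (0:Euc d) 1,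
          radialFn L x ^ (p+α) * radialFn K x ^ (-α) / I = radialFn K x ^ p / VK := by
        intro x hx
        have hG := hGzero x hx
        rw [hGdef] at hG
        simp only at hG
        apply young_eq hθ0 hθ1 (div_pos (hWpos x hx) hI)
          (div_pos (Real.rpow_pos_of_pos (hKpos x hx) p) hVK)
        linarith
      set lam : ℝ := (VK / I) ^ (1/(p+α)) with hlamdef
      have hlam : 0 < lam := Real.rpow_pos_of_pos (div_pos hVK hI) _
      refine ⟨lam, hlam, eq_dilate_of_radialFn hK hL hlam ?_⟩
      intro x hx
      have ha := hKpos x hx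
      have hb := hLpos x hx
      have hcross : radialFn L x ^ (p+α) * radialFn K x ^ (-α) * VK
          = radialFn K x ^ p * I := (div_eq_div_iff hI.ne' hVK.ne').1 (hXY x hx)
      have h1 : radialFn K x ^ (-α) * radialFn K x ^ α = 1 := by
        rw [← Real.rpow_add ha]; norm_num
      have e2 : radialFn K x ^ (p+α) = radialFn K x ^ p * radialFn K x ^ α :=
        Real.rpow_add ha p α
      have hab : radialFn L x ^ (p+α) * VK = radialFn K x ^ (p+α) * I := by
        linear_combination (radialFn K x ^ α) * hcross - I * e2
          - (radialFn L x ^ (p+α) * VK) * h1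
      have hKpow : radialFn K x ^ (p+α) = (lam * radialFn L x) ^ (p+α) := by
        rw [Real.mul_rpow hlam.le hb.le, hlamdef,
          ← Real.rpow_mul (div_pos hVK hI).le, one_div, inv_mul_cancel₀ hpα.ne',
          Real.rpow_one, div_mul_eq_mul_div, eq_div_iff hI.ne']
        linarith [hab]
      exact le_antisymm
        ((Real.rpow_le_rpow_iff ha.le (mul_nonneg hlam.le hb.le) hpα).1 hKpow.le)
        ((Real.rpow_le_rpow_iff (mul_nonneg hlam.le hb.le) ha.le hpα).1 hKpow.ge)
    · rintro ⟨lam, hlam, hKL⟩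
      have hrad : ∀ x ∈ sphere (0:Euc d) 1, radialFn K x = lam * radialFn L x :=
        fun x hx => radialFn_of_dilate hK hL hlam hKL hx
      have hIeq : I = lam ^ (-α) * VL := by
        rw [hIdef]
        have hcongr : ∀ u : sphere (0:Euc d) 1,
            radialFn L (u:Euc d) ^ (p+α) * radialFn K (u:Euc d) ^ (-α)
              = lam ^ (-α) * radialFn L (u:Euc d) ^ p := by
          intro u
          have hb := hLpos _ u.2
          rw [hrad _ u.2, Real.mul_rpow hlam.le hb.le]
          have hbb : radialFn L (u:Euc d) ^ (p+α) * radialFn L (u:Euc d) ^ (-α)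
              = radialFn L (u:Euc d) ^ p := by
            rw [← Real.rpow_add hb]; ring_nf
          linear_combination (lam ^ (-α)) * hbb
        rw [integral_congr_ae (Eventually.of_forall hcongr), integral_const_mul, ← hVLdef]
      have hVKeq : VK = lam ^ p * VL := by
        rw [hVKdef]
        have hcongr : ∀ u : sphere (0:Euc d) 1,
            radialFn K (u:Euc d) ^ p = lam ^ p * radialFn L (u:Euc d) ^ p := by
          intro u
          have hb := hLpos _ u.2
          rw [hrad _ u.2, Real.mul_rpow hlam.le hb.le]
        rw [integral_congr_ae (Eventually.of_forall hcongr), integral_const_mul, ← hVLdef]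
      rw [hCθdef, hIeq, hVKeq,
        Real.mul_rpow (Real.rpow_nonneg hlam.le _) hVL.le,
        Real.mul_rpow (Real.rpow_nonneg hlam.le _) hVL.le,
        ← Real.rpow_mul hlam.le, ← Real.rpow_mul hlam.le]
      have hre : lam ^ (-α*θ) * VL ^ θ * (lam ^ (p*(1-θ)) * VL ^ (1-θ))
          = (lam ^ (-α*θ) * lam ^ (p*(1-θ))) * (VL ^ θ * VL ^ (1-θ)) := by ring
      rw [hre, ← Real.rpow_add hlam, ← Real.rpow_add hVL]
      have e2 : -α*θ + p*(1-θ) = 0 := by rw [hθdef]; field_simp; ring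
      have e3 : θ + (1-θ) = 1 := by ring
      rw [e2, e3, Real.rpow_zero, Real.rpow_one, one_mul]
  -- final bridge
  have hbridge := bridge (a := α) (I := I) (VK := VK) (VL := VL) hp hα hI hVK hVL
  have hvL : (volume L).toReal = VL / p := by
    rw [hVLvol, mul_div_cancel_left₀ _ hp.ne']
  have hvK : (volume K).toReal = VK / p := by
    rw [hVKvol, mul_div_cancel_left₀ _ hp.ne']
  rw [hvL, hvK]
  rw [hCθdef] at hineq hdil
  rw [hθdef] at hineq hdil
  constructor
  · exact hbridge.1.1 hineq
  · exact hbridge.2.symm.trans hdil
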